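/- The reduction system of the KLRW quiver is terminating and reduction-unique: there is no infinite sequence of one-step reductions starting from any path, and for every path w there is a unique irreducible path NF(w) reachable from w by a finite sequence of one-step reductions; equivalently, any two reduction sequences starting from the same path and ending at irreducible paths end at the same irreducible path. (This is the reduction-uniqueness underlying the k-linear isomorphism k·Irr_S(Q) ≅ kQ/I for the KLRW algebra.) -/

import Mathlib

/-- The arrows of the KLRW quiver on vertices `{0, …, n}`:
`p i : i → i+1` and `q i : i+1 → i` (for `0 ≤ i < n`), and loops `s i : i → i`.
(Here `p i` stands for the paper's `p_{i+1}` and `q i` for `q_i`.) -/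
inductive Arrow (n : ℕ) where
  | p (i : Fin n)
  | q (i : Fin n)
  | s (i : Fin (n + 1))
deriving DecidableEq

/-- `RedPair b a` holds when the two-letter word `b·a` (with `a` applied first) is one of
the reducible words `q_i p_{i+1}`, `p_i q_{i−1}`, `s_i p_i`, `s_i q_i` of the KLRW
reduction system.  Paths are written in word order (leftmost = last applied). -/
inductive RedPair {n : ℕ} : Arrow n → Arrow n → Prop where
  | qp (i : Fin n) : RedPair (.q i) (.p i)
  | pq (i : Fin n) : RedPair (.p i) (.q i)
  | sp (i : Fin n) : RedPair (.s i.succ) (.p i)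
  | sq (i : Fin n) : RedPair (.s i.castSucc) (.q i)

/-- A word is irreducible if no left-hand side of the reduction system occurs as a factor
of consecutive arrows. -/
def Irred {n : ℕ} (u : List (Arrow n)) : Prop :=
  List.Chain' (fun b a => ¬ RedPair b a) u

/-- One-step reduction of words (in word order): replace one occurrence of a left-hand
side of the reduction system `q_i p_{i+1} ⟶ s_i`, `p_i q_{i−1} ⟶ s_i`,
`s_i p_i ⟶ p_i s_{i−1}`, `s_i q_i ⟶ q_i s_{i+1}` by the corresponding right-hand side. -/
inductive Step {n : ℕ} : List (Arrow n) → List (Arrow n) → Prop where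
  | qp (L R : List (Arrow n)) (i : Fin n) :
      Step (L ++ [.q i, .p i] ++ R) (L ++ [.s i.castSucc] ++ R)
  | pq (L R : List (Arrow n)) (i : Fin n) :
      Step (L ++ [.p i, .q i] ++ R) (L ++ [.s i.succ] ++ R)
  | sp (L R : List (Arrow n)) (i : Fin n) :
      Step (L ++ [.s i.succ, .p i] ++ R) (L ++ [.p i, .s i.castSucc] ++ R)
  | sq (L R : List (Arrow n)) (i : Fin n) :
      Step (L ++ [.s i.castSucc, .q i] ++ R) (L ++ [.q i, .s i.succ] ++ R)

namespace KLRWaux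

variable {n : ℕ}

/-! ### Termination measure -/

/-- Is the arrow a `p` or a `q`? -/
def pqB : Arrow n → Bool
  | .s _ => false
  | _ => true

/-- Is the arrow an `s`? -/
def sB : Arrow n → Bool
  | .s _ => true
  | _ => false

/-- Number of inversions: pairs (s to the left of a p/q). -/
def nuW : List (Arrow n) → ℕ
  | [] => 0
  | a :: t => (if sB a then t.countP pqB else 0) + nuW t

lemma nuW_append (X Y : List (Arrow n)) :
    nuW (X ++ Y) = nuW X + X.countP sB * Y.countP pqB + nuW Y := by
  induction X with
  | nil => simp [nuW]
  | cons a X ih =>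
    simp only [List.cons_append, nuW, List.countP_append, List.countP_cons, ih]
    cases a <;> simp [sB, pqB, ih] <;> ring

/-- The termination measure. -/
def mM (w : List (Arrow n)) : ℕ := w.length ^ 3 + nuW w

lemma cube_lemma (b x y r : ℕ) (hx : y ≤ x + r) (hr : r ≤ b) :
    b ^ 3 + y < (b + 1) ^ 3 + x := by nlinarith [sq_nonneg b]

lemma mM_step {u v : List (Arrow n)} (h : Step u v) : mM v < mM u := by
  cases h with
  | qp L R i =>
    have hlen : (L ++ [Arrow.q i, Arrow.p i] ++ R).length
        = (L ++ [Arrow.s i.castSucc] ++ R).length + 1 := by simp; omega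
    have hx : nuW (L ++ [Arrow.s i.castSucc] ++ R)
        ≤ nuW (L ++ [Arrow.q i, Arrow.p i] ++ R) + R.countP pqB := by
      simp [nuW_append, List.countP_cons, nuW, sB, pqB]
      ring_nf
      omega
    have hr : R.countP pqB ≤ (L ++ [Arrow.s i.castSucc] ++ R).length := by
      have := List.countP_le_length (l := R) (p := pqB)
      simp; omega
    simp only [mM]
    rw [hlen]
    exact cube_lemma _ _ _ _ hx hr
  | pq L R i =>
    have hlen : (L ++ [Arrow.p i, Arrow.q i] ++ R).length
        = (L ++ [Arrow.s i.succ] ++ R).length + 1 := by simp; omega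
    have hx : nuW (L ++ [Arrow.s i.succ] ++ R)
        ≤ nuW (L ++ [Arrow.p i, Arrow.q i] ++ R) + R.countP pqB := by
      simp [nuW_append, List.countP_cons, nuW, sB, pqB]
      ring_nf
      omega
    have hr : R.countP pqB ≤ (L ++ [Arrow.s i.succ] ++ R).length := by
      have := List.countP_le_length (l := R) (p := pqB)
      simp; omega
    simp only [mM]
    rw [hlen]
    exact cube_lemma _ _ _ _ hx hr
  | sp L R i =>
    have hlen : (L ++ [Arrow.p i, Arrow.s i.castSucc] ++ R).length
        = (L ++ [Arrow.s i.succ, Arrow.p i] ++ R).length := by simp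
    have hnu : nuW (L ++ [Arrow.p i, Arrow.s i.castSucc] ++ R)
        < nuW (L ++ [Arrow.s i.succ, Arrow.p i] ++ R) := by
      simp [nuW_append, List.countP_cons, nuW, sB, pqB]
    simp only [mM]
    rw [hlen]
    exact Nat.add_lt_add_left hnu _
  | sq L R i =>
    have hlen : (L ++ [Arrow.q i, Arrow.s i.succ] ++ R).length
        = (L ++ [Arrow.s i.castSucc, Arrow.q i] ++ R).length := by simp
    have hnu : nuW (L ++ [Arrow.q i, Arrow.s i.succ] ++ R)
        < nuW (L ++ [Arrow.s i.castSucc, Arrow.q i] ++ R) := by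
      simp [nuW_append, List.countP_cons, nuW, sB, pqB]
    simp only [mM]
    rw [hlen]
    exact Nat.add_lt_add_left hnu _

/-! ### The normal form function -/

/-- Insert an arrow at the head of an (irreducible) word, performing reductions. -/
def ins : Arrow n → List (Arrow n) → List (Arrow n)
  | a, [] => [a]
  | .q i, .p j :: t => if i = j then ins (.s i.castSucc) t else .q i :: .p j :: t
  | .p i, .q j :: t => if i = j then ins (.s i.succ) t else .p i :: .q j :: t
  | .s k, .p j :: t => if k = j.succ then .p j :: ins (.s j.castSucc) t else .s k :: .p j :: t
  | .s k, .q j :: t => if k = j.castSucc then .q j :: ins (.s j.succ) t else .s k :: .q j :: t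
  | .p i, .p j :: t => .p i :: .p j :: t
  | .q i, .q j :: t => .q i :: .q j :: t
  | .p i, .s m :: t => .p i :: .s m :: t
  | .q i, .s m :: t => .q i :: .s m :: t
  | .s k, .s m :: t => .s k :: .s m :: t

lemma ins_nil (a : Arrow n) : ins a [] = [a] := by cases a <;> simp [ins]

lemma ins_qp (i : Fin n) (t : List (Arrow n)) :
    ins (.q i) (.p i :: t) = ins (.s i.castSucc) t := by simp [ins]

lemma ins_pq (i : Fin n) (t : List (Arrow n)) :
    ins (.p i) (.q i :: t) = ins (.s i.succ) t := by simp [ins]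

lemma ins_sp (i : Fin n) (t : List (Arrow n)) :
    ins (.s i.succ) (.p i :: t) = .p i :: ins (.s i.castSucc) t := by simp [ins]

lemma ins_sq (i : Fin n) (t : List (Arrow n)) :
    ins (.s i.castSucc) (.q i :: t) = .q i :: ins (.s i.succ) t := by simp [ins]

lemma ins_pp (i j : Fin n) (t : List (Arrow n)) :
    ins (.p i) (.p j :: t) = .p i :: .p j :: t := by simp [ins]

lemma ins_qq (i j : Fin n) (t : List (Arrow n)) :
    ins (.q i) (.q j :: t) = .q i :: .q j :: t := by simp [ins]

lemma ins_ps (i : Fin n) (m : Fin (n + 1)) (t : List (Arrow n)) :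
    ins (.p i) (.s m :: t) = .p i :: .s m :: t := by simp [ins]

lemma ins_qs (i : Fin n) (m : Fin (n + 1)) (t : List (Arrow n)) :
    ins (.q i) (.s m :: t) = .q i :: .s m :: t := by simp [ins]

lemma ins_ss (k m : Fin (n + 1)) (t : List (Arrow n)) :
    ins (.s k) (.s m :: t) = .s k :: .s m :: t := by simp [ins]

lemma not_rp_pp (i j : Fin n) : ¬ RedPair (Arrow.p i) (.p j) := fun h => by cases h
lemma not_rp_qq (i j : Fin n) : ¬ RedPair (Arrow.q i) (.q j) := fun h => by cases h
lemma not_rp_ps (i : Fin n) (m : Fin (n + 1)) : ¬ RedPair (Arrow.p i) (.s m) :=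
  fun h => by cases h
lemma not_rp_qs (i : Fin n) (m : Fin (n + 1)) : ¬ RedPair (Arrow.q i) (.s m) :=
  fun h => by cases h
lemma not_rp_ss (k m : Fin (n + 1)) : ¬ RedPair (Arrow.s k) (.s m) := fun h => by cases h

lemma ins_noreact {a b : Arrow n} (t : List (Arrow n)) (h : ¬ RedPair a b) :
    ins a (b :: t) = a :: b :: t := by
  cases a with
  | p i =>
    cases b with
    | p j => exact ins_pp i j t
    | q j => rw [ins, if_neg]; rintro rfl; exact h (.pq i)
    | s m => exact ins_ps i m t
  | q i =>
    cases b with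
    | p j => rw [ins, if_neg]; rintro rfl; exact h (.qp i)
    | q j => exact ins_qq i j t
    | s m => exact ins_qs i m t
  | s k =>
    cases b with
    | p j => rw [ins, if_neg]; rintro rfl; exact h (.sp j)
    | q j => rw [ins, if_neg]; rintro rfl; exact h (.sq j)
    | s m => exact ins_ss k m t

/-- Inserting an `s` either leaves it at the head or preserves the head of the word. -/
lemma ins_s_cases (k : Fin (n + 1)) (t : List (Arrow n)) :
    (∃ r, ins (.s k) t = .s k :: r) ∨
    (∃ c r, t.head? = some c ∧ ins (.s k) t = c :: r) := by
  cases t with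
  | nil => exact Or.inl ⟨[], ins_nil _⟩
  | cons b t =>
    cases b with
    | p j =>
      by_cases h : k = j.succ
      · exact Or.inr ⟨.p j, _, rfl, by rw [ins, if_pos h]⟩
      · exact Or.inl ⟨_, by rw [ins, if_neg h]⟩
    | q j =>
      by_cases h : k = j.castSucc
      · exact Or.inr ⟨.q j, _, rfl, by rw [ins, if_pos h]⟩
      · exact Or.inl ⟨_, by rw [ins, if_neg h]⟩
    | s m => exact Or.inl ⟨_, ins_ss k m t⟩

lemma irred_ins : ∀ (t : List (Arrow n)) (a : Arrow n), Irred t → Irred (ins a t) := by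
  intro t
  induction t with
  | nil => intro a _; rw [ins_nil]; simp [Irred]; exact List.isChain_singleton _
  | cons b t ih =>
    intro a hbt
    have ht : Irred t := hbt.tail
    by_cases hr : RedPair a b
    · have hhead : ∀ y ∈ t.head?, ¬ RedPair b y := (List.isChain_cons.mp hbt).1
      cases hr with
      | qp i =>
        rw [ins_qp]
        exact ih _ ht
      | pq i =>
        rw [ins_pq]
        exact ih _ ht
      | sp i =>
        rw [ins_sp]
        rw [Irred]; refine List.isChain_cons.mpr ?_
        refine ⟨?_, ih _ ht⟩
        intro y hy
        rcases ins_s_cases i.castSucc t with ⟨r, hx⟩ | ⟨c, r, hc, hx⟩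
        · rw [hx] at hy; simp at hy; subst hy; exact not_rp_ps _ _
        · rw [hx] at hy; simp at hy; subst hy; exact hhead c hc
      | sq i =>
        rw [ins_sq]
        rw [Irred]; refine List.isChain_cons.mpr ?_
        refine ⟨?_, ih _ ht⟩
        intro y hy
        rcases ins_s_cases i.succ t with ⟨r, hx⟩ | ⟨c, r, hc, hx⟩
        · rw [hx] at hy; simp at hy; subst hy; exact not_rp_qs _ _
        · rw [hx] at hy; simp at hy; subst hy; exact hhead c hc
    · rw [ins_noreact t hr]
      exact List.isChain_cons_cons.mpr ⟨hr, hbt⟩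

lemma step_cons (c : Arrow n) {x y : List (Arrow n)} (h : Step x y) :
    Step (c :: x) (c :: y) := by
  cases h with
  | qp L R i => exact Step.qp (c :: L) R i
  | pq L R i => exact Step.pq (c :: L) R i
  | sp L R i => exact Step.sp (c :: L) R i
  | sq L R i => exact Step.sq (c :: L) R i

lemma rtg_cons (c : Arrow n) {x y : List (Arrow n)}
    (h : Relation.ReflTransGen Step x y) :
    Relation.ReflTransGen Step (c :: x) (c :: y) :=
  Relation.ReflTransGen.lift (fun l => c :: l) (fun _ _ => step_cons c) x y h

lemma ins_steps : ∀ (t : List (Arrow n)) (a : Arrow n),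
    Relation.ReflTransGen Step (a :: t) (ins a t) := by
  intro t
  induction t with
  | nil => intro a; rw [ins_nil]
  | cons b t ih =>
    intro a
    by_cases hr : RedPair a b
    · cases hr with
      | qp i =>
        rw [ins_qp]
        exact Relation.ReflTransGen.head (Step.qp [] t i) (ih _)
      | pq i =>
        rw [ins_pq]
        exact Relation.ReflTransGen.head (Step.pq [] t i) (ih _)
      | sp i =>
        rw [ins_sp]
        exact Relation.ReflTransGen.head (Step.sp [] t i) (rtg_cons _ (ih _))
      | sq i =>
        rw [ins_sq]
        exact Relation.ReflTransGen.head (Step.sq [] t i) (rtg_cons _ (ih _))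
    · rw [ins_noreact t hr]

/-- The normal form. -/
def NF (w : List (Arrow n)) : List (Arrow n) := w.foldr ins []

lemma irred_NF (w : List (Arrow n)) : Irred (NF w) := by
  induction w with
  | nil => simp [NF, Irred]; exact List.isChain_nil
  | cons a w ih => exact irred_ins _ a ih

lemma rtg_NF (w : List (Arrow n)) : Relation.ReflTransGen Step w (NF w) := by
  induction w with
  | nil => exact Relation.ReflTransGen.refl
  | cons a w ih =>
    exact Relation.ReflTransGen.trans (rtg_cons a ih) (ins_steps (NF w) a)

lemma NF_irred {v : List (Arrow n)} (h : Irred v) : NF v = v := by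
  induction v with
  | nil => rfl
  | cons a v ih =>
    have hv : Irred v := h.tail
    show ins a (NF v) = a :: v
    rw [ih hv]
    cases v with
    | nil => exact ins_nil a
    | cons b t => exact ins_noreact t (List.isChain_cons_cons.mp h).1

/-! ### The four coherence equations -/

lemma eqA (i : Fin n) (t : List (Arrow n)) (ht : Irred t) :
    ins (.q i) (ins (.p i) t) = ins (.s i.castSucc) t := by
  cases t with
  | nil => rw [ins_nil, ins_qp, ins_nil]
  | cons b t =>
    cases b with
    | p j => rw [ins_pp, ins_qp]
    | q j =>
      by_cases h : i = j
      · subst h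
        rw [ins_pq, ins_sq]
        have hhead : ∀ y ∈ t.head?, ¬ RedPair (Arrow.q i) y := (List.isChain_cons.mp ht).1
        rcases ins_s_cases i.succ t with ⟨r, hx⟩ | ⟨c, r, hc, hx⟩
        · rw [hx]; exact ins_noreact r (not_rp_qs _ _)
        · rw [hx]; exact ins_noreact r (hhead c hc)
      · rw [show ins (.p i) (.q j :: t) = .p i :: .q j :: t by rw [ins, if_neg h],
          ins_qp]
    | s m => rw [ins_ps, ins_qp]

lemma eqB (i : Fin n) (t : List (Arrow n)) (ht : Irred t) :
    ins (.p i) (ins (.q i) t) = ins (.s i.succ) t := by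
  cases t with
  | nil => rw [ins_nil, ins_pq, ins_nil]
  | cons b t =>
    cases b with
    | q j => rw [ins_qq, ins_pq]
    | p j =>
      by_cases h : i = j
      · subst h
        rw [ins_qp, ins_sp]
        have hhead : ∀ y ∈ t.head?, ¬ RedPair (Arrow.p i) y := (List.isChain_cons.mp ht).1
        rcases ins_s_cases i.castSucc t with ⟨r, hx⟩ | ⟨c, r, hc, hx⟩
        · rw [hx]; exact ins_noreact r (not_rp_ps _ _)
        · rw [hx]; exact ins_noreact r (hhead c hc)
      · rw [show ins (.q i) (.p j :: t) = .q i :: .p j :: t by rw [ins, if_neg h],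
          ins_pq]
    | s m => rw [ins_qs, ins_pq]

lemma eqC (i : Fin n) (t : List (Arrow n)) :
    ins (.s i.succ) (ins (.p i) t) = ins (.p i) (ins (.s i.castSucc) t) := by
  cases t with
  | nil => rw [ins_nil, ins_nil, ins_sp, ins_nil, ins_ps]
  | cons b t =>
    cases b with
    | q j =>
      by_cases h : i = j
      · subst h
        rw [ins_pq, ins_sq, ins_pq]
      · rw [show ins (.p i) (.q j :: t) = .p i :: .q j :: t by rw [ins, if_neg h],
          ins_sp,
          show ins (.s i.castSucc) (.q j :: t) = .s i.castSucc :: .q j :: t by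
            rw [ins, if_neg (by simp [Fin.castSucc_inj, h])],
          ins_ps]
    | p j =>
      rw [ins_pp, ins_sp]
      rcases ins_s_cases (n := n) i.castSucc (.p j :: t) with ⟨r, hx⟩ | ⟨c, r, hc, hx⟩
      · rw [hx]; exact (ins_noreact r (not_rp_ps _ _)).symm
      · simp only [List.head?_cons, Option.some.injEq] at hc
        subst hc
        rw [hx]; exact (ins_noreact r (not_rp_pp _ _)).symm
    | s m =>
      rw [ins_ps, ins_sp, ins_ss, ins_ps]

lemma eqD (i : Fin n) (t : List (Arrow n)) :
    ins (.s i.castSucc) (ins (.q i) t) = ins (.q i) (ins (.s i.succ) t) := by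
  cases t with
  | nil => rw [ins_nil, ins_nil, ins_sq, ins_nil, ins_qs]
  | cons b t =>
    cases b with
    | p j =>
      by_cases h : i = j
      · subst h
        rw [ins_qp, ins_sp, ins_qp]
      · rw [show ins (.q i) (.p j :: t) = .q i :: .p j :: t by rw [ins, if_neg h],
          ins_sq,
          show ins (.s i.succ) (.p j :: t) = .s i.succ :: .p j :: t by
            rw [ins, if_neg (by simp [Fin.succ_inj, h])],
          ins_qs]
    | q j =>
      rw [ins_qq, ins_sq]
      rcases ins_s_cases (n := n) i.succ (.q j :: t) with ⟨r, hx⟩ | ⟨c, r, hc, hx⟩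
      · rw [hx]; exact (ins_noreact r (not_rp_qs _ _)).symm
      · simp only [List.head?_cons, Option.some.injEq] at hc
        subst hc
        rw [hx]; exact (ins_noreact r (not_rp_qq _ _)).symm
    | s m =>
      rw [ins_qs, ins_sq, ins_ss, ins_qs]

/-! ### NF is invariant under reduction -/

lemma NF_step {u v : List (Arrow n)} (h : Step u v) : NF u = NF v := by
  cases h with
  | qp L R i =>
    simp only [NF, List.foldr_append, List.foldr_cons, List.foldr_nil]
    congr 1
    exact eqA i _ (irred_NF R)
  | pq L R i =>
    simp only [NF, List.foldr_append, List.foldr_cons, List.foldr_nil]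
    congr 1
    exact eqB i _ (irred_NF R)
  | sp L R i =>
    simp only [NF, List.foldr_append, List.foldr_cons, List.foldr_nil]
    congr 1
    exact eqC i _
  | sq L R i =>
    simp only [NF, List.foldr_append, List.foldr_cons, List.foldr_nil]
    congr 1
    exact eqD i _

lemma NF_rtg {u v : List (Arrow n)} (h : Relation.ReflTransGen Step u v) : NF u = NF v := by
  induction h with
  | refl => rfl
  | tail _ hstep ih => rw [ih, NF_step hstep]

end KLRWaux

/-- The KLRW reduction system is terminating and reduction-unique: there is no infinite
sequence of one-step reductions, and every word reaches a unique irreducible normal form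
by finite sequences of one-step reductions.  (This underlies the `k`-linear isomorphism
`k·Irr_S(Q) ≅ kQ/I` for the KLRW algebra.) -/
theorem reduction_terminating_and_unique (n : ℕ) :
    (∀ f : ℕ → List (Arrow n), ∃ m : ℕ, ¬ Step (f m) (f (m + 1))) ∧
    (∀ u : List (Arrow n), ∃! v : List (Arrow n),
      Relation.ReflTransGen Step u v ∧ Irred v) := by
  constructor
  · intro f
    by_contra h
    push_neg at h
    have hd : ∀ m, KLRWaux.mM (f (m + 1)) < KLRWaux.mM (f m) :=
      fun m => KLRWaux.mM_step (h m)
    have hb : ∀ m, KLRWaux.mM (f m) + m ≤ KLRWaux.mM (f 0) := by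
      intro m
      induction m with
      | zero => simp
      | succ k ih => have := hd k; omega
    have := hb (KLRWaux.mM (f 0) + 1)
    omega
  · intro u
    refine ⟨KLRWaux.NF u, ⟨KLRWaux.rtg_NF u, KLRWaux.irred_NF u⟩, ?_⟩
    rintro v ⟨h1, h2⟩
    rw [← KLRWaux.NF_irred h2, KLRWaux.NF_rtg h1]
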